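/- Let G be a unitary operator on H = ℓ²(C_f, ℂ) and let 𝒩 ⊆ ℤ^d be finite. Suppose that for every subset 𝒜 ⊆ ℤ^d and every bounded operator B on H localized in 𝒜, the operator G† B G is localized in 𝒜 + 𝒩. Then for every subset 𝒜 ⊆ ℤ^d and every bounded operator B on H localized in 𝒜, the operator G B G† is localized in 𝒜 − 𝒩. -/

import Mathlib

open scoped Pointwise ComplexConjugate
open Classical

noncomputable section

variable (d : ℕ) (A : Type) (q : A)

/-- Finite configurations over `ℤ^d`. -/
def Cf : Type := {c : (Fin d → ℤ) → A // {i | c i ≠ q}.Finite}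

/-- Restrictions to `S` of finite configurations. -/
def Rst (S : Set (Fin d → ℤ)) : Type := {u : S → A // {i | u i ≠ q}.Finite}

variable {d A q}

def restr (S : Set (Fin d → ℤ)) (c : Cf d A q) : Rst d A q S :=
  ⟨fun i => c.1 i, c.2.preimage Subtype.val_injective.injOn⟩

def glue {S : Set (Fin d → ℤ)} (u : Rst d A q S) (v : Rst d A q Sᶜ) : Cf d A q :=
  ⟨fun i => if h : i ∈ S then u.1 ⟨i, h⟩ else v.1 ⟨i, h⟩, by
    apply Set.Finite.subset ((u.2.image Subtype.val).union (v.2.image Subtype.val))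
    intro i hi
    by_cases h : i ∈ S
    · exact Or.inl ⟨⟨i, h⟩, by simpa [h] using hi, rfl⟩
    · exact Or.inr ⟨⟨i, h⟩, by simpa [h] using hi, rfl⟩⟩

/-- The Hilbert space `ℓ²(C_f, ℂ)`. -/
abbrev Hd (d : ℕ) (A : Type) (q : A) : Type := lp (fun _ : Cf d A q => ℂ) 2

/-- Canonical basis vector. -/
def e (c : Cf d A q) : Hd d A q := lp.single 2 c 1

/-- A state: countable convex combination of an orthonormal family of pure states. -/
structure State (H : Type) [NormedAddCommGroup H] [InnerProductSpace ℂ H] where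
  ψ : ℕ → H
  p : ℕ → ℝ
  nonneg : ∀ k, 0 ≤ p k
  sum_one : HasSum p 1
  ortho : ∀ j k, p j ≠ 0 → p k ≠ 0 → (inner ℂ (ψ j) (ψ k) : ℂ) = if j = k then 1 else 0

/-- Reduction to `S` of the mixture of the family `ψ` with weights `p`. -/
def redFam (p : ℕ → ℝ) (ψ : ℕ → Hd d A q) (S : Set (Fin d → ℤ)) :
    Rst d A q S → Rst d A q S → ℂ := fun u u' =>
  ∑' k, (p k : ℂ) * ∑' v : Rst d A q Sᶜ, (ψ k) (glue u v) * conj ((ψ k) (glue u' v))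

def reduct (ρ : State (Hd d A q)) (S : Set (Fin d → ℤ)) :
    Rst d A q S → Rst d A q S → ℂ := redFam ρ.p ρ.ψ S

def redApply (G : Hd d A q →L[ℂ] Hd d A q) (ρ : State (Hd d A q)) (S : Set (Fin d → ℤ)) :
    Rst d A q S → Rst d A q S → ℂ := redFam ρ.p (fun k => G (ρ.ψ k)) S

/-- `G` is local at `𝒜` with neighbourhood `𝒩`. -/
def LocalAt (G : Hd d A q →L[ℂ] Hd d A q) (𝒜 𝒩 : Set (Fin d → ℤ)) : Prop :=
  ∀ ρ ρ' : State (Hd d A q), reduct ρ (𝒜 + 𝒩) = reduct ρ' (𝒜 + 𝒩) →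
    redApply G ρ 𝒜 = redApply G ρ' 𝒜

/-- `F` is a cellular automaton. -/
def IsCA (F : Cf d A q → Cf d A q) : Prop :=
  ∃ (N : Set (Fin d → ℤ)) (_ : N.Finite) (f : (N → A) → A),
    f (fun _ => q) = q ∧ ∀ c i, (F c).1 i = f (fun n => c.1 (i + n.1))

/-- `F` is reversible. -/
def Reversible (F : Cf d A q → Cf d A q) : Prop :=
  ∃ NI : Set (Fin d → ℤ), NI.Finite ∧ ∀ x y : Cf d A q, ∀ i : Fin d → ℤ,
    (∀ n ∈ NI, (F x).1 (i + n) = (F y).1 (i + n)) → x.1 i = y.1 i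


/-- A bounded operator `B` is localized in `S`. -/
def Localized (B : Hd d A q →L[ℂ] Hd d A q) (S : Set (Fin d → ℤ)) : Prop :=
  ∃ b : Rst d A q S → Rst d A q S → ℂ, ∀ c c' : Cf d A q,
    (inner ℂ (e c) (B (e c')) : ℂ) =
      if ∀ i ∉ S, c.1 i = c'.1 i then b (restr S c) (restr S c') else 0

section Helpers

variable {d : ℕ} {A : Type} {q : A}

lemma Cf.ext' {c c' : Cf d A q} (h : ∀ i, c.1 i = c'.1 i) : c = c' :=
  Subtype.ext (funext h)

lemma Rst.ext' {S : Set (Fin d → ℤ)} {u u' : Rst d A q S} (h : ∀ i, u.1 i = u'.1 i) : u = u' :=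
  Subtype.ext (funext h)

lemma glue_apply_mem {S : Set (Fin d → ℤ)} (u : Rst d A q S) (v : Rst d A q Sᶜ)
    {i : Fin d → ℤ} (h : i ∈ S) : (glue u v).1 i = u.1 ⟨i, h⟩ := dif_pos h

lemma glue_apply_not_mem {S : Set (Fin d → ℤ)} (u : Rst d A q S) (v : Rst d A q Sᶜ)
    {i : Fin d → ℤ} (h : i ∉ S) : (glue u v).1 i = v.1 ⟨i, h⟩ := dif_neg h

lemma restr_glue_left {S : Set (Fin d → ℤ)} (u : Rst d A q S) (v : Rst d A q Sᶜ) :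
    restr S (glue u v) = u :=
  Rst.ext' fun i => glue_apply_mem u v i.2

lemma restr_glue_right {S : Set (Fin d → ℤ)} (u : Rst d A q S) (v : Rst d A q Sᶜ) :
    restr Sᶜ (glue u v) = v :=
  Rst.ext' fun i => glue_apply_not_mem u v i.2

lemma glue_restr (S : Set (Fin d → ℤ)) (c : Cf d A q) :
    glue (restr S c) (restr Sᶜ c) = c := by
  refine Cf.ext' fun i => ?_
  by_cases h : i ∈ S
  · exact glue_apply_mem _ _ h
  · exact glue_apply_not_mem _ _ h

lemma glue_eq_iff {S : Set (Fin d → ℤ)} (u : Rst d A q S) (v : Rst d A q Sᶜ) (c : Cf d A q) :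
    glue u v = c ↔ restr S c = u ∧ restr Sᶜ c = v := by
  constructor
  · rintro rfl
    exact ⟨restr_glue_left u v, restr_glue_right u v⟩
  · rintro ⟨h1, h2⟩
    rw [← h1, ← h2, glue_restr]

lemma agree_outside_iff (S : Set (Fin d → ℤ)) (c c' : Cf d A q) :
    (∀ i ∉ S, c.1 i = c'.1 i) ↔ restr Sᶜ c = restr Sᶜ c' :=
  ⟨fun h => Rst.ext' fun i => h i.1 i.2,
   fun h i hi => congrArg (fun u : Rst d A q Sᶜ => u.1 ⟨i, hi⟩) h⟩

lemma agree_on_iff (S : Set (Fin d → ℤ)) (c c' : Cf d A q) :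
    (∀ i ∉ Sᶜ, c.1 i = c'.1 i) ↔ restr S c = restr S c' :=
  ⟨fun h => Rst.ext' fun i => h i.1 (not_not_intro i.2),
   fun h i hi => congrArg (fun u : Rst d A q S => u.1 ⟨i, not_not.mp hi⟩) h⟩

end Helpers
section LpBasics

variable {d : ℕ} {A : Type} {q : A}

lemma e_apply (c z : Cf d A q) : (e (q := q) c) z = if z = c then 1 else 0 := by
  by_cases h : z = c
  · subst h; simp [e, lp.single_apply_self]
  · simp [e, lp.single_apply_ne _ _ _ h, h]

lemma inner_e (c : Cf d A q) (x : Hd d A q) : (inner ℂ (e c) x : ℂ) = x c := by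
  simp [e, lp.inner_single_left, RCLike.inner_apply]

lemma hasSum_basis (x : Hd d A q) : HasSum (fun c => x c • e (q := q) c) x := by
  have h := lp.hasSum_single (E := fun _ : Cf d A q => ℂ) (p := 2) (by norm_num) x
  have h2 : (fun c : Cf d A q => x c • e (q := q) c)
      = fun c => lp.single 2 c (x c) := funext fun c => by
    rw [e, ← lp.single_smul]; simp
  rw [h2]; exact h

lemma hasSum_apply_comp (T : Hd d A q →L[ℂ] Hd d A q) (y : Hd d A q) (c : Cf d A q) :
    HasSum (fun c'' => y c'' * (T (e c'')) c) ((T y) c) := by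
  have h2 := ((hasSum_basis y).mapL T).mapL (innerSL ℂ (e c))
  simpa [map_smul, inner_smul_right, inner_e, smul_eq_mul] using h2

set_option synthInstance.maxHeartbeats 1000000 in
lemma clm_ext_entries {T U : Hd d A q →L[ℂ] Hd d A q}
    (h : ∀ c', T (e c') = U (e c')) : T = U := by
  ext x
  have hT := (hasSum_basis x).mapL T
  have hU := (hasSum_basis x).mapL U
  have heq : (fun c => T (x c • e (q := q) c)) = fun c => U (x c • e c) :=
    funext fun c => by rw [map_smul, map_smul, h]
  rw [heq] at hT
  rw [hT.unique hU]

lemma comp_entry (B C : Hd d A q →L[ℂ] Hd d A q) (c c' : Cf d A q) :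
    ((B.comp C) (e c')) c = ∑' c'', (C (e c')) c'' * (B (e c'')) c := by
  rw [ContinuousLinearMap.comp_apply]
  exact (hasSum_apply_comp B (C (e c')) c).tsum_eq.symm

end LpBasics
section Comm

variable {d : ℕ} {A : Type} {q : A}

lemma comp_entry_localized {S₁ S₂ : Set (Fin d → ℤ)}
    (hdisj : ∀ i, i ∈ S₁ → i ∈ S₂ → False)
    {B C : Hd d A q →L[ℂ] Hd d A q} (b₁ : Rst d A q S₁ → Rst d A q S₁ → ℂ)
    (b₂ : Rst d A q S₂ → Rst d A q S₂ → ℂ)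
    (hb₁ : ∀ c c' : Cf d A q, (B (e c')) c =
      if ∀ i ∉ S₁, c.1 i = c'.1 i then b₁ (restr S₁ c) (restr S₁ c') else 0)
    (hb₂ : ∀ c c' : Cf d A q, (C (e c')) c =
      if ∀ i ∉ S₂, c.1 i = c'.1 i then b₂ (restr S₂ c) (restr S₂ c') else 0)
    (c c' : Cf d A q) :
    ((B.comp C) (e c')) c =
      if ∀ i, i ∉ S₁ → i ∉ S₂ → c.1 i = c'.1 i
      then b₁ (restr S₁ c) (restr S₁ c') * b₂ (restr S₂ c) (restr S₂ c') else 0 := by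
  rw [comp_entry]
  by_cases hcond : ∀ i, i ∉ S₁ → i ∉ S₂ → c.1 i = c'.1 i
  · rw [if_pos hcond]
    set c₀ : Cf d A q := glue (restr S₁ c') (restr S₁ᶜ c) with hc₀
    have c₀mem : ∀ i, i ∈ S₁ → c₀.1 i = c'.1 i := fun i hmem => glue_apply_mem _ _ hmem
    have c₀nmem : ∀ i, i ∉ S₁ → c₀.1 i = c.1 i := fun i hmem => glue_apply_not_mem _ _ hmem
    rw [tsum_eq_single c₀ ?_]
    · have h1 : ∀ i ∉ S₂, c₀.1 i = c'.1 i := by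
        intro i hi
        by_cases hS : i ∈ S₁
        · exact c₀mem i hS
        · rw [c₀nmem i hS]; exact hcond i hS hi
      have h2 : ∀ i ∉ S₁, c.1 i = c₀.1 i := fun i hi => (c₀nmem i hi).symm
      have r1 : restr S₁ c₀ = restr S₁ c' := restr_glue_left _ _
      have r2 : restr S₂ c₀ = restr S₂ c :=
        Rst.ext' fun i => c₀nmem i.1 (fun hmem => hdisj i.1 hmem i.2)
      rw [hb₂, hb₁, if_pos h1, if_pos h2, r1, r2, mul_comm]
    · intro c'' hne
      rw [hb₂, hb₁]
      by_cases hA : ∀ i ∉ S₂, c''.1 i = c'.1 i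
      · by_cases hB' : ∀ i ∉ S₁, c.1 i = c''.1 i
        · exfalso
          apply hne
          refine Cf.ext' fun i => ?_
          by_cases hS : i ∈ S₁
          · rw [hA i (fun h2 => hdisj i hS h2), c₀mem i hS]
          · rw [← hB' i hS, c₀nmem i hS]
        · rw [if_neg hB', mul_zero]
      · rw [if_neg hA, zero_mul]
  · rw [if_neg hcond]
    push_neg at hcond
    obtain ⟨i, hi₁, hi₂, hne⟩ := hcond
    have hz : ∀ c'' : Cf d A q, (C (e c')) c'' * (B (e c'')) c = 0 := by
      intro c''
      rw [hb₂, hb₁]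
      by_cases hA : ∀ i ∉ S₂, c''.1 i = c'.1 i
      · by_cases hB' : ∀ i ∉ S₁, c.1 i = c''.1 i
        · exact absurd ((hB' i hi₁).trans (hA i hi₂)) hne
        · rw [if_neg hB', mul_zero]
      · rw [if_neg hA, zero_mul]
    rw [tsum_congr hz, tsum_zero]

lemma localized_entry {B : Hd d A q →L[ℂ] Hd d A q} {S : Set (Fin d → ℤ)}
    (hB : Localized B S) : ∃ b : Rst d A q S → Rst d A q S → ℂ,
    ∀ c c' : Cf d A q, (B (e c')) c =
      if ∀ i ∉ S, c.1 i = c'.1 i then b (restr S c) (restr S c') else 0 := by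
  obtain ⟨b, hb⟩ := hB
  exact ⟨b, fun c c' => by rw [← inner_e]; exact hb c c'⟩

lemma comm_of_disjoint {S₁ S₂ : Set (Fin d → ℤ)}
    (hdisj : ∀ i, i ∈ S₁ → i ∈ S₂ → False)
    {B C : Hd d A q →L[ℂ] Hd d A q} (hB : Localized B S₁) (hC : Localized C S₂) :
    B.comp C = C.comp B := by
  obtain ⟨b₁, hb₁⟩ := localized_entry hB
  obtain ⟨b₂, hb₂⟩ := localized_entry hC
  refine clm_ext_entries fun c' => lp.ext (funext fun c => ?_)
  rw [comp_entry_localized hdisj b₁ b₂ hb₁ hb₂ c c',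
    comp_entry_localized (fun i h2 h1 => hdisj i h1 h2) b₂ b₁ hb₂ hb₁ c c']
  exact if_congr ⟨fun hh i h2 h1 => hh i h1 h2, fun hh i h1 h2 => hh i h2 h1⟩
    (mul_comm _ _) rfl

end Comm
open scoped ENNReal
section Dop

variable {d : ℕ} {A : Type} {q : A}

def DopFun (S : Set (Fin d → ℤ)) (v v' : Rst d A q Sᶜ) (x : Cf d A q → ℂ) :
    Cf d A q → ℂ :=
  fun c => if restr Sᶜ c = v then x (glue (restr S c) v') else 0

lemma Dop_inj (S : Set (Fin d → ℤ)) (v v' : Rst d A q Sᶜ) :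
    Function.Injective
      (fun c : {c : Cf d A q // restr Sᶜ c = v} => glue (restr S c.1) v') := by
  rintro ⟨c₁, h₁⟩ ⟨c₂, h₂⟩ hg
  simp only [Subtype.mk.injEq]
  have : restr S c₁ = restr S c₂ := by
    have := congrArg (restr S) hg
    rwa [restr_glue_left, restr_glue_left] at this
  rw [← glue_restr S c₁, ← glue_restr S c₂, this, h₁, h₂]

lemma Dop_sq_eq (S : Set (Fin d → ℤ)) (v v' : Rst d A q Sᶜ) (x : Hd d A q)
    (c : {c : Cf d A q // restr Sᶜ c = v}) :
    ‖DopFun S v v' (⇑x) c.1‖ ^ (2 : ℝ≥0∞).toReal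
      = ‖x (glue (restr S c.1) v')‖ ^ (2 : ℝ≥0∞).toReal := by
  simp only [DopFun, if_pos c.2]

lemma Dop_supp (S : Set (Fin d → ℤ)) (v v' : Rst d A q Sᶜ) (x : Hd d A q) :
    Function.support (fun c => ‖DopFun S v v' (⇑x) c‖ ^ (2 : ℝ≥0∞).toReal)
      ⊆ {c : Cf d A q | restr Sᶜ c = v} := by
  intro c hc
  by_contra hmem
  simp only [Set.mem_setOf_eq] at hmem
  apply hc
  simp only [DopFun, if_neg hmem, norm_zero]
  rw [Real.zero_rpow (by norm_num)]

lemma Dop_memlp (S : Set (Fin d → ℤ)) (v v' : Rst d A q Sᶜ) (x : Hd d A q) :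
    Memℓp (DopFun S v v' (⇑x)) 2 := by
  apply memℓp_gen
  have hx : Summable (fun c : Cf d A q => ‖x c‖ ^ (2 : ℝ≥0∞).toReal) :=
    (lp.memℓp x).summable (by norm_num)
  have hsub : Summable (fun c : {c : Cf d A q // restr Sᶜ c = v} =>
      ‖DopFun S v v' (⇑x) c.1‖ ^ (2 : ℝ≥0∞).toReal) := by
    refine Summable.congr (hx.comp_injective (Dop_inj S v v')) ?_
    intro c
    exact (Dop_sq_eq S v v' x c).symm
  exact (hasSum_subtype_iff_of_support_subset (Dop_supp S v v' x)).1 hsub.hasSum |>.summable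

lemma Dop_norm_le (S : Set (Fin d → ℤ)) (v v' : Rst d A q Sᶜ) (x : Hd d A q) :
    ‖(⟨DopFun S v v' (⇑x), Dop_memlp S v v' x⟩ : Hd d A q)‖ ≤ ‖x‖ := by
  have h2 : (0:ℝ) < (2 : ℝ≥0∞).toReal := by norm_num
  rw [← Real.rpow_le_rpow_iff (lp.norm_nonneg' _) (norm_nonneg _) h2,
    lp.norm_rpow_eq_tsum h2, lp.norm_rpow_eq_tsum h2]
  have hcoe : ∀ c : Cf d A q,
      ((⟨DopFun S v v' (⇑x), Dop_memlp S v v' x⟩ : Hd d A q) : ∀ _ : Cf d A q, ℂ) c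
        = DopFun S v v' (⇑x) c := fun c => rfl
  have hx : Summable (fun c : Cf d A q => ‖x c‖ ^ (2 : ℝ≥0∞).toReal) :=
    (lp.memℓp x).summable h2
  have hsub : Summable (fun c : {c : Cf d A q // restr Sᶜ c = v} =>
      ‖DopFun S v v' (⇑x) c.1‖ ^ (2 : ℝ≥0∞).toReal) := by
    refine Summable.congr (hx.comp_injective (Dop_inj S v v')) ?_
    intro c
    exact (Dop_sq_eq S v v' x c).symm
  calc ∑' c : Cf d A q, ‖DopFun S v v' (⇑x) c‖ ^ (2 : ℝ≥0∞).toReal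
      = ∑' c : {c : Cf d A q // restr Sᶜ c = v},
          ‖DopFun S v v' (⇑x) c.1‖ ^ (2 : ℝ≥0∞).toReal :=
        (tsum_subtype_eq_of_support_subset (Dop_supp S v v' x)).symm
    _ ≤ ∑' c : Cf d A q, ‖x c‖ ^ (2 : ℝ≥0∞).toReal := by
        refine hsub.tsum_le_tsum_of_inj _ (Dop_inj S v v')
          (fun _ _ => Real.rpow_nonneg (norm_nonneg _) _)
          (fun c => le_of_eq (Dop_sq_eq S v v' x c)) hx

def Dop (S : Set (Fin d → ℤ)) (v v' : Rst d A q Sᶜ) : Hd d A q →L[ℂ] Hd d A q :=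
  LinearMap.mkContinuous
    { toFun := fun x => (⟨DopFun S v v' (⇑x), Dop_memlp S v v' x⟩ : Hd d A q)
      map_add' := fun x y => by
        apply lp.ext
        funext c
        simp only [DopFun, lp.coeFn_add, Pi.add_apply]
        split <;> simp
      map_smul' := fun a x => by
        apply lp.ext
        funext c
        simp only [DopFun, lp.coeFn_smul, Pi.smul_apply, RingHom.id_apply, smul_eq_mul]
        split <;> simp }
    1 (fun x => by simpa using Dop_norm_le S v v' x)

lemma Dop_apply (S : Set (Fin d → ℤ)) (v v' : Rst d A q Sᶜ) (x : Hd d A q) (c : Cf d A q) :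
    (Dop S v v' x) c = if restr Sᶜ c = v then x (glue (restr S c) v') else 0 := rfl

lemma Dop_localized (S : Set (Fin d → ℤ)) (v v' : Rst d A q Sᶜ) :
    Localized (Dop S v v') Sᶜ := by
  refine ⟨fun w w' => if w = v ∧ w' = v' then 1 else 0, fun c c' => ?_⟩
  rw [inner_e, Dop_apply]
  beta_reduce
  have hglue : glue (restr S c) v' = c' ↔ restr S c = restr S c' ∧ restr Sᶜ c' = v' := by
    rw [glue_eq_iff]
    exact ⟨fun ⟨a, b⟩ => ⟨a.symm, b⟩, fun ⟨a, b⟩ => ⟨a.symm, b⟩⟩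
  by_cases h1 : restr S c = restr S c'
  · rw [if_pos ((agree_on_iff S c c').2 h1)]
    by_cases h2 : restr Sᶜ c = v
    · rw [if_pos h2, e_apply]
      by_cases h3 : restr Sᶜ c' = v'
      · rw [if_pos (hglue.2 ⟨h1, h3⟩), if_pos ⟨h2, h3⟩]
      · rw [if_neg (fun hg => h3 (hglue.1 hg).2), if_neg (fun hg => h3 hg.2)]
    · rw [if_neg h2, if_neg (fun hg => h2 hg.1)]
  · rw [if_neg (fun hagree => h1 ((agree_on_iff S c c').1 hagree))]
    by_cases h2 : restr Sᶜ c = v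
    · rw [if_pos h2, e_apply, if_neg (fun hg => h1 (hglue.1 hg).1)]
    · rw [if_neg h2]

lemma Dop_single (S : Set (Fin d → ℤ)) (v v' : Rst d A q Sᶜ) (c' : Cf d A q) :
    Dop S v v' (e c') = if restr Sᶜ c' = v' then e (q := q) (glue (restr S c') v) else 0 := by
  apply lp.ext
  funext c
  rw [Dop_apply, e_apply]
  have hc : c = glue (restr S c') v ↔ restr S c = restr S c' ∧ restr Sᶜ c = v := by
    constructor
    · rintro rfl
      exact ⟨restr_glue_left _ _, restr_glue_right _ _⟩
    · rintro ⟨a, b⟩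
      rw [← glue_restr S c, a, b]
  by_cases h3 : restr Sᶜ c' = v'
  · rw [if_pos h3]
    have : ((e (q := q) (glue (restr S c') v)) : ∀ _ : Cf d A q, ℂ) c
        = if c = glue (restr S c') v then 1 else 0 := e_apply _ _
    rw [this]
    by_cases h2 : restr Sᶜ c = v
    · rw [if_pos h2]
      by_cases h1 : restr S c = restr S c'
      · rw [if_pos (by rw [glue_eq_iff]; exact ⟨h1.symm, h3⟩), if_pos (hc.2 ⟨h1, h2⟩)]
      · rw [if_neg (fun hg => h1 (by rw [glue_eq_iff] at hg; exact hg.1.symm)),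
          if_neg (fun hg => h1 (hc.1 hg).1)]
    · rw [if_neg h2, if_neg (fun hg => h2 (hc.1 hg).2)]
  · rw [if_neg h3]
    have hz : ((0 : Hd d A q) : ∀ _ : Cf d A q, ℂ) c = 0 := rfl
    rw [hz]
    by_cases h2 : restr Sᶜ c = v
    · rw [if_pos h2, if_neg (fun hg => h3 (by rw [glue_eq_iff] at hg; exact hg.2))]
    · rw [if_neg h2]

end Dop
section Final

variable {d : ℕ} {A : Type} {q : A}

def qRst (S : Set (Fin d → ℤ)) : Rst d A q S :=
  ⟨fun _ => q, Set.Finite.subset Set.finite_empty (fun _ hi => absurd rfl hi)⟩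

lemma localized_of_commute (S : Set (Fin d → ℤ)) (C : Hd d A q →L[ℂ] Hd d A q)
    (hcomm : ∀ (v v' : Rst d A q Sᶜ) (x : Hd d A q),
      C (Dop S v v' x) = Dop S v v' (C x)) :
    Localized C S := by
  have key : ∀ (u u' : Rst d A q S) (w w' v v' : Rst d A q Sᶜ),
      (if w' = v' then (C (e (glue u' v))) (glue u w) else 0)
        = if w = v then (C (e (glue u' w'))) (glue u v') else 0 := by
    intro u u' w w' v v'
    have h := congrArg (fun z : Hd d A q => z (glue u w)) (hcomm v v' (e (glue u' w')))
    simp only at h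
    rw [Dop_single S v v' (glue u' w'), restr_glue_right u' w', restr_glue_left u' w',
      Dop_apply S v v' _ (glue u w), restr_glue_right u w, restr_glue_left u w] at h
    convert h using 1
    by_cases h3 : w' = v'
    · rw [if_pos h3, if_pos h3]
    · rw [if_neg h3, if_neg h3, map_zero]
      rfl
  have diag : ∀ (u u' : Rst d A q S) (w v : Rst d A q Sᶜ),
      (C (e (glue u' w))) (glue u w) = (C (e (glue u' v))) (glue u v) := by
    intro u u' w v
    have hk := key u u' w v w v
    rwa [if_pos rfl, if_pos rfl] at hk
  have offd : ∀ (u u' : Rst d A q S) (a b : Rst d A q Sᶜ), a ≠ b →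
      (C (e (glue u' b))) (glue u a) = 0 := by
    intro u u' a b hab
    have hk := key u u' a b a a
    rw [if_neg (fun hh => hab hh.symm), if_pos rfl] at hk
    exact hk.symm
  refine ⟨fun u u' => (C (e (glue u' (qRst Sᶜ)))) (glue u (qRst Sᶜ)), fun c c' => ?_⟩
  rw [inner_e]
  by_cases hagree : ∀ i ∉ S, c.1 i = c'.1 i
  · rw [if_pos hagree]
    have hv : restr Sᶜ c = restr Sᶜ c' := (agree_outside_iff S c c').1 hagree
    calc (C (e c')) c
        = (C (e (glue (restr S c') (restr Sᶜ c')))) (glue (restr S c) (restr Sᶜ c)) := by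
          rw [glue_restr, glue_restr]
      _ = (C (e (glue (restr S c') (restr Sᶜ c)))) (glue (restr S c) (restr Sᶜ c)) := by
          rw [hv]
      _ = (C (e (glue (restr S c') (qRst Sᶜ)))) (glue (restr S c) (qRst Sᶜ)) :=
          diag _ _ _ _
  · rw [if_neg hagree]
    have hv : restr Sᶜ c ≠ restr Sᶜ c' := fun hh => hagree ((agree_outside_iff S c c').2 hh)
    calc (C (e c')) c
        = (C (e (glue (restr S c') (restr Sᶜ c')))) (glue (restr S c) (restr Sᶜ c)) := by
          rw [glue_restr, glue_restr]
      _ = 0 := offd _ _ _ _ hv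

end Final
/-- for a unitary `G`, if `G† B G` is localized in `𝒜 + 𝒩` whenever `B` is
localized in `𝒜`, then `G B G†` is localized in `𝒜 - 𝒩` whenever `B` is localized in `𝒜`. -/
theorem unitary_conj_localized_of_adjoint_conj_localized
    {d : ℕ} (hd : 0 < d) {A : Type} [Fintype A] {q : A}
    (G : Hd d A q →L[ℂ] Hd d A q)
    (hGunit₁ : (ContinuousLinearMap.adjoint G).comp G = ContinuousLinearMap.id ℂ (Hd d A q))
    (hGunit₂ : G.comp (ContinuousLinearMap.adjoint G) = ContinuousLinearMap.id ℂ (Hd d A q))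
    (𝒩 : Set (Fin d → ℤ)) (h𝒩 : 𝒩.Finite)
    (h : ∀ (𝒜 : Set (Fin d → ℤ)) (B : Hd d A q →L[ℂ] Hd d A q), Localized B 𝒜 →
      Localized ((ContinuousLinearMap.adjoint G).comp (B.comp G)) (𝒜 + 𝒩)) :
    ∀ (𝒜 : Set (Fin d → ℤ)) (B : Hd d A q →L[ℂ] Hd d A q), Localized B 𝒜 →
      Localized (G.comp (B.comp (ContinuousLinearMap.adjoint G))) (𝒜 - 𝒩) := by
  intro 𝒜 B hB
  have hGid : ∀ z : Hd d A q, G ((ContinuousLinearMap.adjoint G) z) = z := by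
    intro z
    have := ContinuousLinearMap.ext_iff.1 hGunit₂ z
    simpa using this
  apply localized_of_commute
  intro v v' x
  have hDloc : Localized (Dop (𝒜 - 𝒩) v v') (𝒜 - 𝒩)ᶜ := Dop_localized _ v v'
  have hloc := h (𝒜 - 𝒩)ᶜ (Dop (𝒜 - 𝒩) v v') hDloc
  have hdisj : ∀ i, i ∈ 𝒜 → i ∈ (𝒜 - 𝒩)ᶜ + 𝒩 → False := by
    intro i hiA hiN
    rw [Set.mem_add] at hiN
    obtain ⟨y, hy, n, hn, rfl⟩ := hiN
    exact hy ⟨y + n, hiA, n, hn, add_sub_cancel_right y n⟩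
  have hcomm := comm_of_disjoint hdisj hB hloc
  have hcommx : ∀ w : Hd d A q,
      B ((ContinuousLinearMap.adjoint G) ((Dop (𝒜 - 𝒩) v v') (G w)))
        = (ContinuousLinearMap.adjoint G) ((Dop (𝒜 - 𝒩) v v') (G (B w))) := by
    intro w
    have := ContinuousLinearMap.ext_iff.1 hcomm w
    simpa [ContinuousLinearMap.comp_apply] using this
  simp only [ContinuousLinearMap.comp_apply]
  calc G (B ((ContinuousLinearMap.adjoint G) ((Dop (𝒜 - 𝒩) v v') x)))
      = G (B ((ContinuousLinearMap.adjoint G)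
          ((Dop (𝒜 - 𝒩) v v') (G ((ContinuousLinearMap.adjoint G) x))))) := by
        rw [hGid]
    _ = G ((ContinuousLinearMap.adjoint G)
          ((Dop (𝒜 - 𝒩) v v') (G (B ((ContinuousLinearMap.adjoint G) x))))) := by
        rw [hcommx]
    _ = (Dop (𝒜 - 𝒩) v v') (G (B ((ContinuousLinearMap.adjoint G) x))) := hGid _

end
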